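/- Let f ∈ ℂ[x,y,z] be a nonzero polynomial whose support (the set of exponent vectors of its nonzero monomials, viewed as a subset of ℚ³) is affinely independent. Then f has no singular point in (ℂ ∖ {0})³. -/

import Mathlib

open MvPolynomial

noncomputable section

/-- `p` is a singular point of `h` lying in the torus `(ℂ ∖ {0})³`. -/
def SingularAt3 (h : MvPolynomial (Fin 3) ℂ) (p : Fin 3 → ℂ) : Prop :=
  (∀ i, p i ≠ 0) ∧ eval p h = 0 ∧ ∀ i : Fin 3, eval p (pderiv i h) = 0

/-- A linearly independent family of rational vectors admits a rational dual functional
picking out any chosen index. -/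
lemma exists_dual_family {ι n : Type*} [Fintype n] [DecidableEq n] [DecidableEq ι]
    (v : ι → (n → ℚ)) (hv : LinearIndependent ℚ v) (i₀ : ι) :
    ∃ a : n → ℚ, ∀ i, (∑ j, a j * v i j) = if i = i₀ then 1 else 0 := by
  classical
  set b := Module.Basis.span hv with hb
  obtain ⟨g, hg⟩ := LinearMap.exists_extend (b.coord i₀)
  refine ⟨fun j => g (fun k => if j = k then 1 else 0), fun i => ?_⟩
  have hvmem : v i ∈ Submodule.span ℚ (Set.range v) := Submodule.subset_span ⟨i, rfl⟩
  have h1 : g (v i) = ∑ j, v i j * g (fun k => if j = k then 1 else 0) := by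
    rw [LinearMap.pi_apply_eq_sum_univ g (v i)]
    simp [smul_eq_mul]
  have hbi : b i = (⟨v i, hvmem⟩ : Submodule.span ℚ (Set.range v)) :=
    Module.Basis.span_apply hv i
  have h2 : g (v i) = if i = i₀ then 1 else 0 := by
    have h3 := LinearMap.congr_fun hg (⟨v i, hvmem⟩ : Submodule.span ℚ (Set.range v))
    have h4 : b.coord i₀ (⟨v i, hvmem⟩ : Submodule.span ℚ (Set.range v))
        = if i = i₀ then 1 else 0 := by
      rw [← hbi, Module.Basis.coord_apply, Module.Basis.repr_self, Finsupp.single_apply]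
    simpa [h4] using h3
  rw [← h2, h1]
  exact Finset.sum_congr rfl fun j _ => mul_comm _ _

theorem no_singularity_for_simplicial_support
    (f : MvPolynomial (Fin 3) ℂ) (hf : f ≠ 0)
    (hA : AffineIndependent ℚ
      (fun m : f.support => (fun i => (m.1 i : ℚ) : Fin 3 → ℚ))) :
    ¬ ∃ p : Fin 3 → ℂ, SingularAt3 f p := by
  classical
  rintro ⟨p, hp0, hpf, hpd⟩
  -- the extended family (1, m) in ℚ⁴
  set v : f.support → (Fin 4 → ℚ) :=
    fun m => Fin.cons 1 (fun i => (m.1 i : ℚ)) with hv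
  have hli : LinearIndependent ℚ v := by
    rw [Fintype.linearIndependent_iff]
    intro g hg i
    have h0 : ∑ e : f.support, g e = 0 := by
      have := congrFun hg 0
      simpa [hv, Finset.sum_apply, Fin.cons_zero] using this
    have h1 : ∑ e : f.support, g e • (fun i => ((e.1 i : ℚ)) : Fin 3 → ℚ) = 0 := by
      funext j
      have := congrFun hg j.succ
      simpa [hv, Finset.sum_apply, Fin.cons_succ] using this
    exact affineIndependent_iff.1 hA Finset.univ g h0 h1 i (Finset.mem_univ i)
  -- monomial values
  set P : (Fin 3 →₀ ℕ) → ℂ := fun m => m.prod fun j e => p j ^ e with hPdef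
  have hPne : ∀ m, P m ≠ 0 := by
    intro m
    rw [hPdef]
    exact Finset.prod_ne_zero_iff.2 fun j _ => pow_ne_zero _ (hp0 j)
  -- key polynomial identity
  have key : ∀ i : Fin 3, (X i : MvPolynomial (Fin 3) ℂ) * pderiv i f
      = ∑ m ∈ f.support, monomial m (coeff m f * (m i : ℂ)) := by
    intro i
    conv_lhs => rw [f.as_sum]
    rw [map_sum, Finset.mul_sum]
    refine Finset.sum_congr rfl fun m _ => ?_
    rw [pderiv_monomial]
    by_cases h : m i = 0
    · simp [h]
    · rw [X, monomial_mul, one_mul]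
      have hle : Finsupp.single i 1 ≤ m := Finsupp.single_le_iff.2 (Nat.one_le_iff_ne_zero.2 h)
      rw [add_tsub_cancel_of_le hle]
  -- evaluation equations
  have eq0 : ∑ m ∈ f.support, coeff m f * P m = 0 := by
    have : eval p f = ∑ m ∈ f.support, coeff m f * P m := by
      conv_lhs => rw [f.as_sum]
      rw [map_sum]
      exact Finset.sum_congr rfl fun m _ => eval_monomial
    rw [← this, hpf]
  have eqi : ∀ i : Fin 3, ∑ m ∈ f.support, (coeff m f * (m i : ℂ)) * P m = 0 := by
    intro i
    have h := key i
    have h2 : eval p ((X i : MvPolynomial (Fin 3) ℂ) * pderiv i f) = 0 := by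
      rw [eval_mul, hpd i, mul_zero]
    rw [h, map_sum] at h2
    rw [← h2]
    exact Finset.sum_congr rfl fun m _ => eval_monomial.symm
  -- the complex weights
  set t : f.support → ℂ := fun m => coeff m.1 f * P m.1 with ht
  have htne : ∀ m : f.support, t m ≠ 0 := fun m =>
    mul_ne_zero (mem_support_iff.1 m.2) (hPne m.1)
  -- combined equations
  have heq : ∀ j : Fin 4, ∑ m : f.support, t m * ((v m j : ℚ) : ℂ) = 0 := by
    intro j
    refine Fin.cases ?_ (fun i => ?_) j
    · have : ∑ m : f.support, t m * ((v m 0 : ℚ) : ℂ)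
          = ∑ m ∈ f.support, coeff m f * P m := by
        rw [← Finset.sum_attach f.support (fun m => coeff m f * P m)]
        exact Finset.sum_congr rfl fun m _ => by simp [hv, ht, Fin.cons_zero]
      rw [this, eq0]
    · have : ∑ m : f.support, t m * ((v m i.succ : ℚ) : ℂ)
          = ∑ m ∈ f.support, (coeff m f * (m i : ℂ)) * P m := by
        rw [← Finset.sum_attach f.support (fun m => (coeff m f * (m i : ℂ)) * P m)]
        refine Finset.sum_congr rfl fun m _ => ?_
        simp only [hv, ht, Fin.cons_succ]
        push_cast
        ring
      rw [this, eqi]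
  -- support is nonempty
  have hne : f.support.Nonempty := support_nonempty.2 hf
  obtain ⟨m₀, hm₀⟩ := hne
  obtain ⟨a, ha⟩ := exists_dual_family v hli ⟨m₀, hm₀⟩
  have : t ⟨m₀, hm₀⟩ = 0 := by
    have hcalc : ∑ m : f.support, t m * ((∑ j, a j * v m j : ℚ) : ℂ) = 0 := by
      have hswap : ∑ m : f.support, t m * ((∑ j, a j * v m j : ℚ) : ℂ)
          = ∑ j, ((a j : ℂ)) * ∑ m : f.support, t m * ((v m j : ℚ) : ℂ) := by
        push_cast
        simp_rw [Finset.mul_sum]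
        rw [Finset.sum_comm]
        refine Finset.sum_congr rfl fun j _ => Finset.sum_congr rfl fun m _ => by ring
      rw [hswap]
      simp only [heq, mul_zero, Finset.sum_const_zero]
    have : ∑ m : f.support, t m * ((∑ j, a j * v m j : ℚ) : ℂ)
        = t ⟨m₀, hm₀⟩ := by
      have hterm : ∀ m : f.support, t m * ((∑ j, a j * v m j : ℚ) : ℂ)
          = if m = ⟨m₀, hm₀⟩ then t m else 0 := by
        intro m
        rw [ha m]
        split <;> simp_all
      rw [Finset.sum_congr rfl (fun m _ => hterm m)]
      simp
    rw [← this, hcalc]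
  exact htne _ this

end
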